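/- arXiv:math/0309039 — 5 statements merged into one kernel-verified Lean document; each statement's English description precedes it below -/
import Mathlib

section
/- Let k ≥ 2 be an integer and let d = (d_1, …, d_k) ∈ ℤ^k satisfy d_1 + ⋯ + d_k = 0. If α ∈ ℤ^k satisfies α_i ≥ 0 for all i and Σ_{i=1}^{k} α_i δ_i = d, then Σ_{i=1}^{k} α_i ≥ φ(d). In other words, φ(d) is the minimum 1-norm among all nonnegative integer representations of d in terms of the vectors δ_1, …, δ_k. -/
/-- `delta k i` is the vector `δ_i ∈ ℤ^k` with `(δ_i)_i = 1`, `(δ_i)_{i+1} = -1`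
(indices taken mod k) and all other components `0`. -/
def delta (k : ℕ) (i : Fin k) : Fin k → ℤ :=
  fun j => if j = i then 1 else if (j : ℕ) = ((i : ℕ) + 1) % k then -1 else 0

/-- `gamma d j = Σ_{i ≤ j} d_i`, the partial sums of `d`. -/
def gamma {k : ℕ} (d : Fin k → ℤ) (j : Fin k) : ℤ := ∑ i ∈ Finset.Iic j, d i

/-- `phi d = Σ_j (γ_j - min_m γ_m)`, the shortest rearrangement path length. -/
noncomputable def phi {k : ℕ} (d : Fin k → ℤ) : ℤ :=
  ∑ j : Fin k, (gamma d j - sInf (Set.range (gamma d)))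

/-- any nonnegative integer representation `Σ_i α_i δ_i = d` has
`Σ_i α_i ≥ φ(d)`: `φ(d)` is the minimal 1-norm of such representations. -/
theorem phi_is_min_path_length (k : ℕ) (hk : 2 ≤ k) (d : Fin k → ℤ)
    (hd : ∑ i, d i = 0) (α : Fin k → ℤ) (hα : ∀ i, 0 ≤ α i)
    (hrep : ∑ i, α i • delta k i = d) :
    phi d ≤ ∑ i, α i := by
  have hk0 : 0 < k := by omega
  set pr : Fin k → Fin k := fun j => ⟨(j.val + (k-1)) % k, Nat.mod_lt _ hk0⟩ with hpr
  have hsucc : ∀ j : Fin k, ((pr j).val + 1) % k = j.val := by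
    intro j
    show ((j.val + (k-1)) % k + 1) % k = j.val
    rw [Nat.mod_add_mod]
    have : j.val + (k-1) + 1 = j.val + k := by omega
    rw [this, Nat.add_mod_right, Nat.mod_eq_of_lt j.isLt]
  have hinj : ∀ i j : Fin k, (j : ℕ) = ((i : ℕ) + 1) % k → i = pr j := by
    intro i j h
    apply Fin.ext
    show (i : ℕ) = (j.val + (k-1)) % k
    rw [h, Nat.mod_add_mod]
    have : (i : ℕ) + 1 + (k-1) = (i : ℕ) + k := by omega
    rw [this, Nat.add_mod_right, Nat.mod_eq_of_lt i.isLt]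
  have hne : ∀ j : Fin k, pr j ≠ j := by
    intro j hEq
    have h := hsucc j
    rw [hEq] at h
    rcases Nat.lt_or_ge (j.val + 1) k with h1 | h1
    · rw [Nat.mod_eq_of_lt h1] at h; omega
    · have hj := j.isLt
      have h2 : j.val + 1 = k := by omega
      rw [h2, Nat.mod_self] at h
      omega
  -- key: d j = α j - α (pr j)
  have key : ∀ j : Fin k, d j = α j - α (pr j) := by
    intro j
    have h := congrFun hrep j
    rw [Finset.sum_apply] at h
    have hterm : ∀ i ∈ Finset.univ, (α i • delta k i) j
        = (if i = j then α j else 0) + (if i = pr j then -(α (pr j)) else 0) := by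
      intro i _
      unfold delta
      simp only [Pi.smul_apply, smul_eq_mul]
      by_cases h1 : i = j
      · subst h1
        rw [if_pos rfl, if_pos rfl, if_neg (fun hh => hne i hh.symm)]
        ring
      · rw [if_neg (Ne.symm h1), if_neg h1]
        by_cases h2 : i = pr j
        · subst h2
          rw [if_pos (hsucc j).symm, if_pos rfl]
          ring
        · rw [if_neg (fun hh => h2 (hinj i j hh)), if_neg h2]
          ring
    rw [Finset.sum_congr rfl hterm, Finset.sum_add_distrib,
      Finset.sum_ite_eq' Finset.univ j, Finset.sum_ite_eq' Finset.univ (pr j)] at h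
    simp only [Finset.mem_univ, if_true] at h
    linarith
  -- telescoping: gamma d j = α j - α ⟨k-1, _⟩
  have hlast : k - 1 < k := by omega
  have hpr0 : ∀ (h0 : 0 < k), pr ⟨0, h0⟩ = ⟨k-1, hlast⟩ := by
    intro h0
    apply Fin.ext
    show (0 + (k-1)) % k = k - 1
    rw [Nat.zero_add, Nat.mod_eq_of_lt hlast]
  have hprS : ∀ (n : ℕ) (h : n + 1 < k), pr ⟨n+1, h⟩ = ⟨n, by omega⟩ := by
    intro n h
    apply Fin.ext
    show (n + 1 + (k-1)) % k = n
    have : n + 1 + (k-1) = n + k := by omega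
    rw [this, Nat.add_mod_right, Nat.mod_eq_of_lt (by omega)]
  have tele : ∀ (n : ℕ) (h : n < k), gamma d ⟨n, h⟩ = α ⟨n, h⟩ - α ⟨k-1, hlast⟩ := by
    intro n
    induction n with
    | zero =>
      intro h
      have hI : Finset.Iic (⟨0, h⟩ : Fin k) = {⟨0, h⟩} := by
        ext x
        simp only [Finset.mem_Iic, Finset.mem_singleton, Fin.le_def, Fin.ext_iff]
        omega
      rw [gamma, hI, Finset.sum_singleton, key, hpr0 h]
    | succ n ih =>
      intro h
      have hI : Finset.Iic (⟨n+1, h⟩ : Fin k)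
          = insert (⟨n+1, h⟩ : Fin k) (Finset.Iic (⟨n, by omega⟩ : Fin k)) := by
        ext x
        simp only [Finset.mem_Iic, Finset.mem_insert, Fin.le_def, Fin.ext_iff]
        omega
      have hnotmem : (⟨n+1, h⟩ : Fin k) ∉ Finset.Iic (⟨n, by omega⟩ : Fin k) := by
        simp only [Finset.mem_Iic, Fin.le_def]
        omega
      rw [gamma, hI, Finset.sum_insert hnotmem, ← gamma, ih (by omega), key, hprS n h]
      ring
  have teleF : ∀ j : Fin k, gamma d j = α j - α ⟨k-1, hlast⟩ := by
    intro j
    have := tele j.val j.isLt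
    simpa using this
  -- the infimum is attained
  set m := sInf (Set.range (gamma d)) with hm
  have hmem : m ∈ Set.range (gamma d) := by
    apply Int.csInf_mem
    · exact ⟨gamma d ⟨0, hk0⟩, Set.mem_range_self _⟩
    · obtain ⟨L, hL⟩ := (Set.finite_range (gamma d)).bddBelow
      exact ⟨L, hL⟩
  obtain ⟨j0, hj0⟩ := hmem
  have hbound : -m ≤ α ⟨k-1, hlast⟩ := by
    have h1 := teleF j0
    have h2 := hα j0
    rw [hj0] at h1
    linarith
  -- conclude
  rw [phi]
  apply Finset.sum_le_sum
  intro j _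
  have := teleF j
  have := hα j
  nlinarith [teleF j, hα j, hbound]
end

section
/- Let k ≥ 2 and n ≥ k be integers and let q be a real number. For every configuration X (a k-tuple of positive integers summing to n), Σ_Z q^{φ(X − Z)} = Σ_Z q^{φ(Z − X*)}, where both sums range over all configurations Z. That is, the collection of shortest rearrangement path lengths into X equals the collection of shortest rearrangement path lengths out of the co-state X*. -/
/-- The reversal (co-state) `X* = (x_k, …, x_1)` of `X = (x_1, …, x_k)`. -/
def revVec {k : ℕ} {α : Type*} (X : Fin k → α) : Fin k → α := fun j => X j.rev

namespace Aux

def S {k : ℕ} (d : Fin k → ℤ) (t : ℕ) : ℤ :=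
  ∑ i ∈ Finset.univ.filter (fun i : Fin k => (i : ℕ) < t), d i

lemma S_zero {k} (d : Fin k → ℤ) : S d 0 = 0 := by simp [S]

lemma S_k {k} (d : Fin k → ℤ) : S d k = ∑ i, d i := by
  rw [S]; congr 1; ext i; simp [i.isLt]

lemma gamma_eq_S {k} (d : Fin k → ℤ) (j : Fin k) : gamma d j = S d ((j : ℕ) + 1) := by
  rw [gamma, S]; congr 1; ext i
  simp only [Finset.mem_Iic, Finset.mem_filter, Finset.mem_univ, true_and, Fin.le_def]
  omega

lemma gamma_neg_rev {k} (d : Fin k → ℤ) (hd : ∑ i, d i = 0) (j : Fin k) :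
    gamma (-revVec d) j = S d ((j.rev : ℕ)) := by
  have h1 : gamma (-revVec d) j = -∑ i ∈ Finset.Iic j, d i.rev := by
    simp [gamma, revVec]
  have h2 : ∑ i ∈ Finset.Iic j, d i.rev
      = ∑ i ∈ Finset.univ.filter (fun i : Fin k => ¬ (i : ℕ) < (j.rev : ℕ)), d i := by
    apply Finset.sum_bij' (fun (i : Fin k) (_ : i ∈ Finset.Iic j) => i.rev)
      (fun (i : Fin k) (_ : i ∈ Finset.univ.filter (fun i : Fin k => ¬ (i : ℕ) < (j.rev : ℕ))) => i.rev)
    · intro a ha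
      simp only [Finset.mem_filter, Finset.mem_univ, true_and, not_lt, ← Fin.le_def]
      exact Fin.rev_le_rev.mpr (Finset.mem_Iic.mp ha)
    · intro a ha
      simp only [Finset.mem_filter, Finset.mem_univ, true_and, not_lt, ← Fin.le_def] at ha
      refine Finset.mem_Iic.mpr ?_
      have := Fin.rev_le_rev.mpr ha
      simpa using this
    · intro a _; exact Fin.rev_rev a
    · intro a _; exact Fin.rev_rev a
    · intro a _; rfl
  have h3 := Finset.sum_filter_add_sum_filter_not Finset.univ
      (fun i : Fin k => (i : ℕ) < (j.rev : ℕ)) d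
  rw [h1, h2]
  have h4 : S d (j.rev : ℕ) + ∑ i ∈ Finset.univ.filter (fun i : Fin k => ¬ (i : ℕ) < (j.rev : ℕ)), d i = 0 := by
    rw [S, h3, hd]
  linarith

lemma rev_cast {k : ℕ} (t : ℕ) (ht : t < k) : ∃ i : Fin k, (i.rev : ℕ) = t := by
  refine ⟨(⟨t, ht⟩ : Fin k).rev, ?_⟩
  rw [Fin.rev_rev]

lemma range_gamma_neg_rev {k} (hk : 0 < k) (d : Fin k → ℤ) (hd : ∑ i, d i = 0) :
    Set.range (gamma (-revVec d)) = Set.range (gamma d) := by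
  ext x
  simp only [Set.mem_range]
  constructor
  · rintro ⟨j, rfl⟩
    rw [gamma_neg_rev d hd]
    rcases Nat.eq_zero_or_pos (j.rev : ℕ) with h0 | hpos
    · refine ⟨⟨k - 1, by omega⟩, ?_⟩
      rw [gamma_eq_S, h0, S_zero]
      have : (k - 1) + 1 = k := by omega
      simp only [this, S_k, hd]
    · refine ⟨⟨(j.rev : ℕ) - 1, by omega⟩, ?_⟩
      rw [gamma_eq_S]
      congr 1
      simp only []
      omega
  · rintro ⟨j, rfl⟩
    rw [gamma_eq_S]
    rcases Nat.lt_or_ge ((j : ℕ) + 1) k with h | h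
    · obtain ⟨i, hi⟩ := rev_cast ((j : ℕ) + 1) h
      exact ⟨i, by rw [gamma_neg_rev d hd, hi]⟩
    · have hjk : (j : ℕ) + 1 = k := by have := j.isLt; omega
      obtain ⟨i, hi⟩ := rev_cast 0 hk
      refine ⟨i, ?_⟩
      rw [gamma_neg_rev d hd, hi, S_zero, hjk, S_k, hd]

lemma sum_gamma_neg_rev {k} (d : Fin k → ℤ) (hd : ∑ i, d i = 0) :
    ∑ j, gamma (-revVec d) j = ∑ j, gamma d j := by
  simp only [fun j => gamma_neg_rev d hd j, fun j => gamma_eq_S d j]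
  rw [show (fun j : Fin k => S d (j.rev : ℕ)) = fun j : Fin k => (fun i : Fin k => S d (i : ℕ)) (Fin.revPerm j) from rfl]
  rw [Equiv.sum_comp Fin.revPerm (fun i : Fin k => S d (i : ℕ))]
  rw [Fin.sum_univ_eq_sum_range (fun t => S d t), Fin.sum_univ_eq_sum_range (fun t => S d (t + 1))]
  have h1 := Finset.sum_range_succ' (S d) k
  have h2 := Finset.sum_range_succ (S d) k
  rw [S_zero] at h1
  rw [S_k, hd] at h2
  linarith

lemma phi_neg_rev {k} (hk : 0 < k) (d : Fin k → ℤ) (hd : ∑ i, d i = 0) :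
    phi (-revVec d) = phi d := by
  unfold phi
  rw [range_gamma_neg_rev hk d hd, Finset.sum_sub_distrib, Finset.sum_sub_distrib,
    sum_gamma_neg_rev d hd]

lemma sum_revVec {k : ℕ} (Z : Fin k → ℤ) : ∑ i, revVec Z i = ∑ i, Z i := by
  exact Equiv.sum_comp Fin.revPerm Z

end Aux

/-- for every configuration `X`, the sum over all configurations
`Z` of `q^{φ(X - Z)}` (path lengths into `X`) equals the sum over all
configurations `Z` of `q^{φ(Z - X*)}` (path lengths out of the co-state `X*`). -/
theorem paths_into_eq_paths_out_of_costate (k n : ℕ) (hk : 2 ≤ k) (hn : k ≤ n)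
    (q : ℝ) (X : Fin k → ℤ) (hX : (∀ i, 0 < X i) ∧ ∑ i, X i = (n : ℤ)) :
    ∑ᶠ Z ∈ {Z : Fin k → ℤ | (∀ i, 0 < Z i) ∧ ∑ i, Z i = (n : ℤ)}, q ^ phi (X - Z)
      = ∑ᶠ Z ∈ {Z : Fin k → ℤ | (∀ i, 0 < Z i) ∧ ∑ i, Z i = (n : ℤ)},
          q ^ phi (Z - revVec X) := by
  set s : Set (Fin k → ℤ) := {Z : Fin k → ℤ | (∀ i, 0 < Z i) ∧ ∑ i, Z i = (n : ℤ)} with hs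
  have hmaps : Set.MapsTo (revVec : (Fin k → ℤ) → (Fin k → ℤ)) s s := by
    rintro Z ⟨hpos, hsum⟩
    exact ⟨fun i => hpos i.rev, by rw [Aux.sum_revVec, hsum]⟩
  have hinv : Set.InvOn (revVec : (Fin k → ℤ) → (Fin k → ℤ)) revVec s s := by
    constructor <;> · intro Z _; funext i; simp [revVec, Fin.rev_rev]
  have hbij : Set.BijOn (revVec : (Fin k → ℤ) → (Fin k → ℤ)) s s :=
    hinv.bijOn hmaps hmaps
  refine finsum_mem_eq_of_bijOn revVec hbij ?_
  rintro Z ⟨hpos, hsum⟩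
  congr 1
  have hd : ∑ i, (X - Z) i = 0 := by
    simp only [Pi.sub_apply, Finset.sum_sub_distrib, hX.2, hsum, sub_self]
  have hrw : revVec Z - revVec X = -revVec (X - Z) := by
    funext i; simp [revVec]
  rw [hrw, Aux.phi_neg_rev (by omega) (X - Z) hd]
end

section
/- Let k and n be integers with 1 ≤ k ≤ n and let r be a real number. Then Σ_{(X,B)} r^{|B|} = Σ_{b=0}^{k−1} C(k, b) · C(n−b−1, k−b−1) · r^b, where the left-hand sum ranges over all states (X, B), i.e., over all pairs where X = (x_1, …, x_k) is a k-tuple of positive integers with x_1 + ⋯ + x_k = n and B is a proper subset of {1, …, k} with x_i = 1 for every i ∈ B, and C(·,·) denotes the binomial coefficient. -/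
/-- The set of states of the circular-warehouse model: pairs `(X, B)` where `X`
is a k-tuple of positive integers summing to `n` and `B` is a proper subset of
the workers with `X i = 1` for every blocked worker `i ∈ B`. -/
def States (k n : ℕ) : Set ((Fin k → ℕ) × Finset (Fin k)) :=
  {p | (∀ i, 0 < p.1 i) ∧ (∑ i, p.1 i = n) ∧ p.2 ≠ Finset.univ ∧ ∀ i ∈ p.2, p.1 i = 1}

open Finset

/-- Stars and bars for `Finset.sym`. -/
lemma card_finset_sym {ι : Type*} [DecidableEq ι] (s : Finset ι) (t : ℕ) :
    (s.sym t).card = Nat.multichoose s.card t := by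
  classical
  have hinj : Function.Injective (Sym.map (Subtype.val : {x // x ∈ s} → ι)) :=
    Sym.map_injective Subtype.val_injective t
  have h : s.sym t = univ.map ⟨Sym.map (Subtype.val : {x // x ∈ s} → ι), hinj⟩ := by
    ext m
    simp only [mem_map, mem_univ, true_and, Function.Embedding.coeFn_mk]
    constructor
    · intro hm
      rw [Finset.mem_sym_iff] at hm
      refine ⟨Sym.map (fun x : {x // x ∈ m} => (⟨x.1, hm x.1 x.2⟩ : {x // x ∈ s}))
        m.attach, ?_⟩
      rw [Sym.map_map]
      have := Sym.attach_map_coe m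
      simpa using this
    · rintro ⟨m', rfl⟩
      rw [Finset.mem_sym_iff]
      intro a ha
      obtain ⟨b, _, rfl⟩ := Sym.mem_map.1 ha
      exact b.2
  rw [h, card_map, card_univ, Sym.card_sym_eq_multichoose, Fintype.card_coe]

/-- Stars and bars for `piAntidiag`. -/
lemma card_piAntidiag {ι : Type*} [Fintype ι] [DecidableEq ι] (s : Finset ι) (t : ℕ) :
    (Finset.piAntidiag s t).card = Nat.multichoose s.card t := by
  rw [← Finset.map_sym_eq_piAntidiag, card_map, card_finset_sym]

/-- For a fixed proper subset `B` of blocked workers, the number of tuples is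
`C(n - |B| - 1, k - |B| - 1)`. -/
lemma card_states_fixed (k n : ℕ) (hk : 1 ≤ k) (hkn : k ≤ n) (B : Finset (Fin k))
    (hB : B.card < k) :
    ((Finset.piAntidiag (univ : Finset (Fin k)) n).filter
        (fun x => (∀ i, 0 < x i) ∧ ∀ i ∈ B, x i = 1)).card
      = (n - B.card - 1).choose (k - B.card - 1) := by
  classical
  have hbk : B.card ≤ k := le_of_lt hB
  -- bijection with piAntidiag Bᶜ (n - k)
  have key : ((Finset.piAntidiag (univ : Finset (Fin k)) n).filter
        (fun x => (∀ i, 0 < x i) ∧ ∀ i ∈ B, x i = 1)).card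
      = (Finset.piAntidiag Bᶜ (n - k)).card := by
    apply Finset.card_nbij' (fun x i => x i - 1)
      (fun y i => if i ∈ B then 1 else y i + 1)
    · intro x hx
      simp only [Finset.mem_coe, mem_filter, Finset.mem_piAntidiag, mem_univ, forall_const] at hx
      obtain ⟨⟨hsum, -⟩, hpos, hone⟩ := hx
      simp only [Finset.mem_coe]
      rw [Finset.mem_piAntidiag]
      constructor
      · have h1 : ∑ i ∈ Bᶜ, (x i - 1) = (∑ i ∈ Bᶜ, x i) - Bᶜ.card := by
          rw [Finset.sum_tsub_distrib]
          · simp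
          · intro i _; exact hpos i
        have h2 : ∑ i ∈ Bᶜ, x i = n - B.card := by
          have : ∑ i ∈ B, x i + ∑ i ∈ Bᶜ, x i = n := by
            rw [Finset.sum_add_sum_compl, hsum]
          have hBsum : ∑ i ∈ B, x i = B.card := by
            rw [Finset.sum_congr rfl hone]; simp
          omega
        rw [h1, h2, Finset.card_compl]
        simp only [Fintype.card_fin]
        omega
      · intro i hi
        simp only [Finset.mem_compl]
        intro hiB
        have := hone i hiB
        omega
    · intro y hy
      rw [Finset.mem_coe, Finset.mem_piAntidiag] at hy
      obtain ⟨hsum, hsupp⟩ := hy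
      simp only [Finset.mem_coe, mem_filter, Finset.mem_piAntidiag, mem_univ, forall_const]
      refine ⟨⟨?_, fun _ _ => trivial⟩, ?_, ?_⟩
      · have : ∑ i : Fin k, (if i ∈ B then 1 else y i + 1)
            = ∑ i ∈ B, 1 + ∑ i ∈ Bᶜ, (y i + 1) := by
          rw [← Finset.sum_add_sum_compl B]
          congr 1
          · exact Finset.sum_congr rfl fun i hi => by simp [hi]
          · exact Finset.sum_congr rfl fun i hi => by
              simp [Finset.mem_compl.1 hi]
        rw [this, Finset.sum_add_distrib, hsum]
        simp only [Finset.sum_const, smul_eq_mul, mul_one, Finset.card_compl,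
          Fintype.card_fin]
        omega
      · intro i; split <;> omega
      · intro i hi; simp [hi]
    · intro x hx
      simp only [Finset.mem_coe, mem_filter] at hx
      obtain ⟨-, hpos, hone⟩ := hx
      funext i
      simp only
      split
      · next h => exact (hone i h).symm
      · next h => have := hpos i; omega
    · intro y hy
      rw [Finset.mem_coe, Finset.mem_piAntidiag] at hy
      funext i
      by_cases hi : i ∈ B
      · have : y i = 0 := by
          by_contra h
          exact (Finset.mem_compl.1 (hy.2 i h)) hi
        simp [hi, this]
      · simp [hi]
  rw [key, card_piAntidiag, Finset.card_compl, Fintype.card_fin, Nat.multichoose_eq]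
  clear key
  have h1 : k - B.card + (n - k) - 1 = n - B.card - 1 := by omega
  rw [h1]
  have h2 : n - k = (n - B.card - 1) - (k - B.card - 1) := by omega
  rw [h2, Nat.choose_symm (by omega)]

/-- the total weight of all states, each state `(X,B)` weighted by
`r^{|B|}`, equals `Σ_{b=0}^{k-1} C(k,b) * C(n-b-1, k-b-1) * r^b`. -/
theorem warehouse_total_weight (k n : ℕ) (hk : 1 ≤ k) (hkn : k ≤ n) (r : ℝ) :
    ∑ᶠ p ∈ States k n, r ^ p.2.card
      = ∑ b ∈ Finset.range k,
          (Nat.choose k b : ℝ) * (Nat.choose (n - b - 1) (k - b - 1) : ℝ) * r ^ b := by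
  classical
  set S : Finset ((Fin k → ℕ) × Finset (Fin k)) :=
    (Finset.piAntidiag (univ : Finset (Fin k)) n ×ˢ univ).filter
      (fun p => (∀ i, 0 < p.1 i) ∧ p.2 ≠ univ ∧ ∀ i ∈ p.2, p.1 i = 1) with hS
  have hcoe : States k n = ↑S := by
    ext p
    simp only [States, Set.mem_setOf_eq, hS, coe_filter, mem_product,
      Finset.mem_piAntidiag, mem_univ, and_true, Set.mem_setOf_eq]
    constructor
    · rintro ⟨h1, h2, h3, h4⟩
      exact ⟨⟨h2, fun i _ => trivial⟩, h1, h3, h4⟩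
    · rintro ⟨⟨h2, -⟩, h1, h3, h4⟩
      exact ⟨h1, h2, h3, h4⟩
  rw [hcoe, finsum_mem_coe_finset]
  -- unfold the filtered product sum
  rw [hS, Finset.sum_filter, Finset.sum_product_right]
  have step1 : ∀ B : Finset (Fin k),
      (∑ x ∈ Finset.piAntidiag (univ : Finset (Fin k)) n,
        if (∀ i, 0 < x i) ∧ B ≠ univ ∧ ∀ i ∈ B, x i = 1 then r ^ B.card else 0)
      = if B ≠ univ then
          (((Finset.piAntidiag (univ : Finset (Fin k)) n).filter
            (fun x => (∀ i, 0 < x i) ∧ ∀ i ∈ B, x i = 1)).card : ℝ) * r ^ B.card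
        else 0 := by
    intro B
    by_cases hB : B ≠ univ
    · rw [if_pos hB]
      rw [← Finset.sum_filter]
      have : (Finset.piAntidiag (univ : Finset (Fin k)) n).filter
            (fun x => (∀ i, 0 < x i) ∧ B ≠ univ ∧ ∀ i ∈ B, x i = 1)
          = (Finset.piAntidiag (univ : Finset (Fin k)) n).filter
            (fun x => (∀ i, 0 < x i) ∧ ∀ i ∈ B, x i = 1) := by
        apply Finset.filter_congr
        intro x _
        simp [hB]
      rw [this, Finset.sum_const, nsmul_eq_mul]
    · rw [if_neg hB]
      push_neg at hB
      apply Finset.sum_eq_zero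
      intro x _
      rw [if_neg]
      rintro ⟨-, h, -⟩
      exact h hB
  simp_rw [step1]
  -- group subsets by cardinality
  rw [← Finset.powerset_univ, Finset.powerset_card_disjiUnion]
  erw [Finset.sum_disjiUnion]
  simp only [Finset.card_univ, Fintype.card_fin]
  rw [Finset.sum_range_succ]
  have hlast : (∑ B ∈ Finset.powersetCard k (univ : Finset (Fin k)),
      if B ≠ univ then
        (((Finset.piAntidiag (univ : Finset (Fin k)) n).filter
          (fun x => (∀ i, 0 < x i) ∧ ∀ i ∈ B, x i = 1)).card : ℝ) * r ^ B.card
      else 0) = 0 := by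
    apply Finset.sum_eq_zero
    intro B hB
    rw [Finset.mem_powersetCard] at hB
    have : B = univ := Finset.eq_univ_of_card B (by rw [hB.2]; simp)
    rw [if_neg (by simp [this])]
  rw [hlast, add_zero]
  apply Finset.sum_congr rfl
  intro b hb
  rw [Finset.mem_range] at hb
  have hcard : ∀ B ∈ Finset.powersetCard b (univ : Finset (Fin k)),
      (if B ≠ univ then
        (((Finset.piAntidiag (univ : Finset (Fin k)) n).filter
          (fun x => (∀ i, 0 < x i) ∧ ∀ i ∈ B, x i = 1)).card : ℝ) * r ^ B.card
      else 0) = (Nat.choose (n - b - 1) (k - b - 1) : ℝ) * r ^ b := by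
    intro B hB
    rw [Finset.mem_powersetCard] at hB
    obtain ⟨-, hBb⟩ := hB
    have hBne : B ≠ univ := by
      intro h
      rw [h, card_univ, Fintype.card_fin] at hBb
      omega
    rw [if_pos hBne, card_states_fixed k n hk hkn B (by rw [hBb]; exact hb), hBb]
  rw [Finset.sum_congr rfl hcard, Finset.sum_const, Finset.card_powersetCard,
    card_univ, Fintype.card_fin, nsmul_eq_mul, mul_assoc]
end

section
/- Let k and n be integers with 2 ≤ k ≤ n and let r be a real number. Then Σ_{(X,B) : 1 ∈ B} r^{|B|} = Σ_{b=0}^{k−2} C(k−1, b) · C(n−b−2, k−b−2) · r^{b+1}, where the left-hand sum ranges over all states (X, B) in which worker 1 is blocked, i.e., over all pairs where X = (x_1, …, x_k) is a k-tuple of positive integers with x_1 + ⋯ + x_k = n, B is a proper subset of {1, …, k} with x_i = 1 for every i ∈ B, and 1 ∈ B, and C(·,·) denotes the binomial coefficient. -/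
open Finset

lemma card_posComp (ι : Type) [Fintype ι] [DecidableEq ι] (m : ℕ)
    (h1 : 1 ≤ Fintype.card ι) (h2 : Fintype.card ι ≤ m) :
    ((Finset.piAntidiag (Finset.univ : Finset ι) m).filter (fun f => ∀ i, 0 < f i)).card
      = (m - 1).choose (Fintype.card ι - 1) := by
  classical
  have h3 : Fintype.card ι + (m - Fintype.card ι) - 1 = m - 1 := by omega
  have h4 : m - Fintype.card ι = (m - 1) - (Fintype.card ι - 1) := by omega
  have e1 : ((Finset.piAntidiag (Finset.univ : Finset ι) m).filter (fun f => ∀ i, 0 < f i))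
      ≃ {Q : ι → ℕ // ∑ i, Q i = m - Fintype.card ι} := by
    refine
      { toFun := fun x => ⟨fun i => x.1 i - 1, ?_⟩
        invFun := fun Q => ⟨fun i => Q.1 i + 1, ?_⟩
        left_inv := ?_
        right_inv := ?_ }
    · obtain ⟨f, hf⟩ := x
      rw [mem_filter, mem_piAntidiag] at hf
      obtain ⟨⟨hsum, -⟩, hpos⟩ := hf
      have h3 : ∑ i, (f i - 1 + 1) = ∑ i, f i :=
        Finset.sum_congr rfl (fun i _ => by have := hpos i; omega)
      rw [Finset.sum_add_distrib] at h3
      simp only [Finset.sum_const, card_univ, smul_eq_mul, mul_one] at h3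
      have hsum' : ∑ i, f i = m := hsum
      show ∑ i, (f i - 1) = m - Fintype.card ι
      omega
    · obtain ⟨Q, hQ⟩ := Q
      simp only [mem_coe, mem_filter, mem_piAntidiag]
      refine ⟨⟨?_, fun i _ => mem_univ i⟩, fun i => Nat.succ_pos _⟩
      rw [Finset.sum_add_distrib]
      simp only [Finset.sum_const, card_univ, smul_eq_mul, mul_one]
      omega
    · rintro ⟨f, hf⟩
      rw [mem_filter] at hf
      ext i
      exact Nat.succ_pred_eq_of_pos (hf.2 i)
    · rintro ⟨Q, hQ⟩
      ext i
      simp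
  have e2 : ((Finset.piAntidiag (Finset.univ : Finset ι) m).filter (fun f => ∀ i, 0 < f i))
      ≃ Sym ι (m - Fintype.card ι) :=
    e1.trans (Sym.equivNatSumOfFintype ι (m - Fintype.card ι)).symm
  have hc := Fintype.card_congr e2
  rw [Fintype.card_coe, Sym.card_sym_eq_choose] at hc
  rw [hc, h3, h4]
  have h5 : Fintype.card ι - 1 ≤ m - 1 := by clear hc e1 e2 h3 h4; omega
  exact Nat.choose_symm h5

lemma card_fiber (k n : ℕ) (hkn : k ≤ n) (B : Finset (Fin k)) (hB : B.card < k) :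
    ((Finset.piAntidiag (Finset.univ : Finset (Fin k)) n).filter
        (fun x => (∀ i, 0 < x i) ∧ ∀ i ∈ B, x i = 1)).card
      = (n - B.card - 1).choose (k - B.card - 1) := by
  classical
  have hcard : Fintype.card ↥(Bᶜ : Finset (Fin k)) = k - B.card := by
    rw [Fintype.card_coe, Finset.card_compl, Fintype.card_fin]
  have ha1 : 1 ≤ Fintype.card ↥(Bᶜ : Finset (Fin k)) := by rw [hcard]; omega
  have ha2 : Fintype.card ↥(Bᶜ : Finset (Fin k)) ≤ n - B.card := by rw [hcard]; omega
  have key :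
      ((Finset.piAntidiag (Finset.univ : Finset (Fin k)) n).filter
        (fun x => (∀ i, 0 < x i) ∧ ∀ i ∈ B, x i = 1)).card
      = ((Finset.piAntidiag (Finset.univ : Finset ↥(Bᶜ : Finset (Fin k))) (n - B.card)).filter
          (fun f => ∀ i, 0 < f i)).card := by
    refine Finset.card_bij' (i := fun x _ => fun j : ↥(Bᶜ : Finset (Fin k)) => x j.val)
      (j := fun g _ => fun i : Fin k =>
        if h : i ∈ B then 1 else g ⟨i, Finset.mem_compl.mpr h⟩) ?_ ?_ ?_ ?_
    · intro x hx
      rw [mem_filter, mem_piAntidiag] at hx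
      obtain ⟨⟨hsum, -⟩, hpos, hone⟩ := hx
      rw [mem_filter, mem_piAntidiag]
      refine ⟨⟨?_, fun i _ => mem_univ i⟩, fun j => hpos j.val⟩
      have h1 : ∑ j : ↥(Bᶜ : Finset (Fin k)), x j.val = ∑ i ∈ Bᶜ, x i :=
        Finset.sum_coe_sort _ _
      have h2 : ∑ i ∈ B, x i + ∑ i ∈ Bᶜ, x i = ∑ i, x i :=
        Finset.sum_add_sum_compl B x
      have h3 : ∑ i ∈ B, x i = B.card := by
        rw [Finset.sum_congr rfl hone]
        simp
      have hsum' : ∑ i, x i = n := hsum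
      rw [h1]
      omega
    · intro g hg
      rw [mem_filter, mem_piAntidiag] at hg
      obtain ⟨⟨hsum, -⟩, hpos⟩ := hg
      rw [mem_filter, mem_piAntidiag]
      refine ⟨⟨?_, fun i _ => mem_univ i⟩, fun i => ?_, fun i hi => by simp [hi]⟩
      · show ∑ i, (if h : i ∈ B then 1 else g ⟨i, Finset.mem_compl.mpr h⟩) = n
        have h2 : ∑ i ∈ B, (if h : i ∈ B then 1 else g ⟨i, Finset.mem_compl.mpr h⟩)
            + ∑ i ∈ Bᶜ, (if h : i ∈ B then 1 else g ⟨i, Finset.mem_compl.mpr h⟩)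
            = ∑ i, (if h : i ∈ B then 1 else g ⟨i, Finset.mem_compl.mpr h⟩) :=
          Finset.sum_add_sum_compl B _
        have h3 : ∑ i ∈ B, (if h : i ∈ B then 1 else g ⟨i, Finset.mem_compl.mpr h⟩)
            = B.card := by
          rw [Finset.sum_congr rfl (fun i hi => dif_pos hi)]
          simp
        have h4 : ∑ i ∈ Bᶜ, (if h : i ∈ B then 1 else g ⟨i, Finset.mem_compl.mpr h⟩)
            = n - B.card := by
          have ha : ∑ i ∈ Bᶜ, (if h : i ∈ B then 1 else g ⟨i, Finset.mem_compl.mpr h⟩)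
              = ∑ j ∈ Bᶜ.attach, g j := by
            rw [← Finset.sum_attach Bᶜ
              (fun i => if h : i ∈ B then 1 else g ⟨i, Finset.mem_compl.mpr h⟩)]
            exact Finset.sum_congr rfl (fun j _ => dif_neg (Finset.mem_compl.mp j.2))
          rw [ha, ← Finset.univ_eq_attach]
          exact hsum
        have hb : B.card ≤ n := by omega
        omega
      · by_cases h : i ∈ B
        · simp [h]
        · simpa [h] using hpos _
    · intro x hx
      rw [mem_filter] at hx
      funext i
      by_cases h : i ∈ B
      · simpa [h] using (hx.2.2 i h).symm
      · simp [h]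
    · intro g hg
      funext j
      show (if h : (j : Fin k) ∈ B then 1 else g ⟨j, Finset.mem_compl.mpr h⟩) = g j
      simp [Finset.mem_compl.mp j.2]
  rw [key, card_posComp _ _ ha1 ha2, hcard]

lemma card_subsets (k : ℕ) (a : Fin k) (b : ℕ) (hb : b + 1 < k) :
    (Finset.univ.filter
        (fun B : Finset (Fin k) => a ∈ B ∧ B ≠ Finset.univ ∧ B.card = b + 1)).card
      = (k - 1).choose b := by
  classical
  have key : (Finset.univ.filter
        (fun B : Finset (Fin k) => a ∈ B ∧ B ≠ Finset.univ ∧ B.card = b + 1)).card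
      = ((Finset.univ.erase a).powersetCard b).card := by
    refine Finset.card_bij' (i := fun B _ => B.erase a) (j := fun C _ => insert a C)
      ?_ ?_ ?_ ?_
    · intro B hB
      rw [mem_filter] at hB
      obtain ⟨-, haB, -, hcard⟩ := hB
      rw [mem_powersetCard]
      exact ⟨Finset.erase_subset_erase a (Finset.subset_univ B),
        by rw [Finset.card_erase_of_mem haB, hcard]; omega⟩
    · intro C hC
      rw [mem_powersetCard] at hC
      obtain ⟨hsub, hcard⟩ := hC
      have haC : a ∉ C := fun h => (Finset.mem_erase.mp (hsub h)).1 rfl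
      rw [mem_filter]
      refine ⟨mem_univ _, Finset.mem_insert_self a C, ?_, ?_⟩
      · intro h
        have h2 := congrArg Finset.card h
        rw [Finset.card_insert_of_notMem haC, hcard, Finset.card_univ,
          Fintype.card_fin] at h2
        omega
      · rw [Finset.card_insert_of_notMem haC, hcard]
    · intro B hB
      rw [mem_filter] at hB
      exact Finset.insert_erase hB.2.1
    · intro C hC
      rw [mem_powersetCard] at hC
      exact Finset.erase_insert (fun h => (Finset.mem_erase.mp (hC.1 h)).1 rfl)
  rw [key, Finset.card_powersetCard, Finset.card_erase_of_mem (mem_univ a),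
    Finset.card_univ, Fintype.card_fin]

/-- the total weight of all states in which worker 1 is blocked,
each state `(X,B)` weighted by `r^{|B|}`, equals
`Σ_{b=0}^{k-2} C(k-1,b) * C(n-b-2, k-b-2) * r^{b+1}`. -/
theorem warehouse_blocked_worker_weight (k n : ℕ) (hk : 2 ≤ k) (hkn : k ≤ n) (r : ℝ) :
    ∑ᶠ p ∈ {p ∈ States k n | (⟨0, by omega⟩ : Fin k) ∈ p.2}, r ^ p.2.card
      = ∑ b ∈ Finset.range (k - 1),
          (Nat.choose (k - 1) b : ℝ) * (Nat.choose (n - b - 2) (k - b - 2) : ℝ)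
            * r ^ (b + 1) := by
  classical
  have hk0 : 0 < k := by omega
  set i0 : Fin k := ⟨0, by omega⟩ with hi0def
  set pA : Finset (Fin k → ℕ) := Finset.piAntidiag (Finset.univ : Finset (Fin k)) n with hpA
  set S : Finset ((Fin k → ℕ) × Finset (Fin k)) :=
    (pA ×ˢ Finset.univ).filter
      (fun p => ((∀ i, 0 < p.1 i) ∧ ∀ i ∈ p.2, p.1 i = 1)
        ∧ (i0 ∈ p.2 ∧ p.2 ≠ Finset.univ)) with hS
  have hset : {p ∈ States k n | (⟨0, by omega⟩ : Fin k) ∈ p.2} = ↑S := by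
    ext p
    simp only [Set.mem_setOf_eq, States, hS, Finset.coe_filter, Finset.mem_coe,
      Finset.mem_product, Finset.mem_univ, and_true, hpA, Finset.mem_piAntidiag]
    tauto
  rw [hset, finsum_mem_coe_finset]
  set F : Finset (Finset (Fin k)) :=
    Finset.univ.filter (fun B => i0 ∈ B ∧ B ≠ Finset.univ) with hF
  have step1 : ∑ p ∈ S, r ^ p.2.card
      = ∑ B ∈ F, (((pA.filter
          (fun x => (∀ i, 0 < x i) ∧ ∀ i ∈ B, x i = 1)).card : ℝ) * r ^ B.card) := by
    rw [hS, Finset.sum_filter, Finset.sum_product, Finset.sum_comm, hF,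
      Finset.sum_filter]
    refine Finset.sum_congr rfl (fun B _ => ?_)
    by_cases hB : i0 ∈ B ∧ B ≠ Finset.univ
    · rw [if_pos hB]
      have : ∀ x ∈ pA,
          (if ((∀ i, 0 < x i) ∧ ∀ i ∈ B, x i = 1) ∧ (i0 ∈ B ∧ B ≠ Finset.univ)
            then r ^ B.card else 0)
          = (if ((∀ i, 0 < x i) ∧ ∀ i ∈ B, x i = 1) then r ^ B.card else 0) := by
        intro x _
        rw [if_congr (and_iff_left hB) rfl rfl]
      rw [Finset.sum_congr rfl this, ← Finset.sum_filter, Finset.sum_const,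
        nsmul_eq_mul]
    · rw [if_neg hB]
      refine Finset.sum_eq_zero (fun x _ => if_neg (fun h => hB h.2))
  rw [step1]
  have step2 : ∑ B ∈ F, (((pA.filter
          (fun x => (∀ i, 0 < x i) ∧ ∀ i ∈ B, x i = 1)).card : ℝ) * r ^ B.card)
      = ∑ B ∈ F, (((n - B.card - 1).choose (k - B.card - 1) : ℝ) * r ^ B.card) := by
    refine Finset.sum_congr rfl (fun B hB => ?_)
    rw [hF, Finset.mem_filter] at hB
    have hlt : B.card < k := by
      have := (Finset.card_lt_iff_ne_univ B).mpr hB.2.2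
      rwa [Fintype.card_fin] at this
    rw [hpA, card_fiber k n hkn B hlt]
  rw [step2]
  have maps : ∀ B ∈ F, B.card - 1 ∈ Finset.range (k - 1) := by
    intro B hB
    rw [hF, Finset.mem_filter] at hB
    have h1 : 0 < B.card := Finset.card_pos.mpr ⟨i0, hB.2.1⟩
    have h2 : B.card < k := by
      have := (Finset.card_lt_iff_ne_univ B).mpr hB.2.2
      rwa [Fintype.card_fin] at this
    rw [Finset.mem_range]
    omega
  rw [← Finset.sum_fiberwise_of_maps_to maps
    (fun B => ((n - B.card - 1).choose (k - B.card - 1) : ℝ) * r ^ B.card)]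
  refine Finset.sum_congr rfl (fun b hb => ?_)
  rw [Finset.mem_range] at hb
  have hb1 : b + 1 < k := by omega
  have hfil : F.filter (fun B => B.card - 1 = b)
      = Finset.univ.filter
          (fun B : Finset (Fin k) => i0 ∈ B ∧ B ≠ Finset.univ ∧ B.card = b + 1) := by
    rw [hF, Finset.filter_filter]
    refine Finset.filter_congr (fun B _ => ?_)
    constructor
    · rintro ⟨⟨h1, h2⟩, h3⟩
      have : 0 < B.card := Finset.card_pos.mpr ⟨i0, h1⟩
      exact ⟨h1, h2, by omega⟩
    · rintro ⟨h1, h2, h3⟩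
      exact ⟨⟨h1, h2⟩, by omega⟩
  have hterm : ∀ B ∈ F.filter (fun B => B.card - 1 = b),
      ((n - B.card - 1).choose (k - B.card - 1) : ℝ) * r ^ B.card
        = ((n - b - 2).choose (k - b - 2) : ℝ) * r ^ (b + 1) := by
    intro B hB
    rw [hfil, Finset.mem_filter] at hB
    obtain ⟨-, -, -, hcard⟩ := hB
    rw [hcard]
    have e1 : n - (b + 1) - 1 = n - b - 2 := by omega
    have e2 : k - (b + 1) - 1 = k - b - 2 := by omega
    rw [e1, e2]
  rw [Finset.sum_congr rfl hterm, Finset.sum_const, hfil, card_subsets k i0 b hb1,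
    nsmul_eq_mul]
  ring
end

section
/- Let k ≥ 2 and n ≥ k be integers, let s, q be reals with 0 < s < 1 and q = 1 − s, and set r = q/s. For states i = (X, B) and j = (Y, C), define the transition probability p_{ij} = r^{|C|} · (s^k / (1 − q^k)) · q^{φ(Y − X)}, and define the weight ω_i = r^{|B|}. Then for every state j, Σ_i ω_i · p_{ij} = ω_j, where the sum ranges over all states i. Consequently the normalized distribution ν = ω / (Σ_i ω_i) is a stationary distribution of the Markov chain with transition matrix (p_{ij}). -/
open scoped ENNReal

namespace WH

open Fin.NatCast Fin.CommRing

variable {k : ℕ} [NeZero k]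

/-- feasibility of a flow `g` w.r.t. configuration `Y`. -/
def Feas (Y g : Fin k → ℕ) : Prop := ∀ j, g j + 1 ≤ g (j - 1) + Y j

/-- set of saturated edges. -/
def Eset (Y g : Fin k → ℕ) : Finset (Fin k) :=
  Finset.univ.filter (fun j => g j + 1 = g (j - 1) + Y j)

/-- configuration associated to a feasible flow. -/
def Xof (Y g : Fin k → ℕ) : Fin k → ℕ := fun j => Y j + g (j - 1) - g j

lemma sum_pred {M : Type*} [AddCommMonoid M] (f : Fin k → M) :
    ∑ j : Fin k, f (j - 1) = ∑ j : Fin k, f j :=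
  Fintype.sum_equiv (Equiv.subRight (1 : Fin k)) _ _ (fun _ => rfl)

lemma gamma_range (d : Fin k → ℤ) (j : Fin k) :
    gamma d j = ∑ i ∈ Finset.range (j.1 + 1), d (i : Fin k) := by
  refine Finset.sum_nbij' (fun i => (i.1 : ℕ)) (fun i => (i : Fin k)) ?_ ?_ ?_ ?_ ?_
  · intro a ha
    simp only [Finset.mem_Iic] at ha
    simp only [Finset.mem_range]
    exact Nat.lt_succ_of_le ha
  · intro a ha
    simp only [Finset.mem_range] at ha
    have hak : a < k := lt_of_lt_of_le ha (Nat.succ_le_of_lt j.2)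
    have hv : ((a : Fin k)).1 = a := Fin.val_cast_of_lt hak
    simp only [Finset.mem_Iic]
    exact Fin.le_def.mpr (by omega)
  · intro a _; exact Fin.cast_val_eq_self a
  · intro a ha
    simp only [Finset.mem_range] at ha
    exact Fin.val_cast_of_lt (lt_of_lt_of_le ha (Nat.succ_le_of_lt j.2))
  · intro a _; simp [Fin.cast_val_eq_self]

lemma gamma_univ (d : Fin k → ℤ) : gamma d (0 - 1) = ∑ i : Fin k, d i := by
  have h1 : ((0 - 1 : Fin k)).1 = k - 1 := by
    rcases Nat.exists_eq_succ_of_ne_zero (NeZero.ne k) with ⟨m, rfl⟩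
    simp [Fin.coe_sub_one]
  rw [gamma_range, h1]
  have hk : k - 1 + 1 = k := Nat.succ_pred_eq_of_pos (Nat.pos_of_ne_zero (NeZero.ne k))
  rw [hk, ← Fin.sum_univ_eq_sum_range (fun i => d (i : Fin k)) k]
  exact Fintype.sum_congr _ _ (fun i => by rw [Fin.cast_val_eq_self])

/-- telescoping: if `d i = g i - g (i-1)`, then `gamma d j = g j - g (0-1)`. -/
lemma gamma_telescope (d : Fin k → ℤ) (g : Fin k → ℤ)
    (hd : ∀ i, d i = g i - g (i - 1)) (j : Fin k) :
    gamma d j = g j - g (0 - 1) := by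
  rw [gamma_range]
  set F : ℕ → ℤ := fun i => g ((i : Fin k) - 1) with hF
  have key : ∀ i : ℕ, d (i : Fin k) = F (i + 1) - F i := by
    intro i
    have h1 : ((i + 1 : ℕ) : Fin k) - 1 = (i : Fin k) := by
      push_cast; ring
    rw [hd, hF]; simp only [h1]
  have : ∑ i ∈ Finset.range (j.1 + 1), d (i : Fin k)
      = ∑ i ∈ Finset.range (j.1 + 1), (F (i + 1) - F i) :=
    Finset.sum_congr rfl (fun i _ => key i)
  rw [this, Finset.sum_range_sub F (j.1 + 1)]
  have h2 : ((j.1 + 1 : ℕ) : Fin k) - 1 = j := by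
    push_cast; simp [Fin.cast_val_eq_self]
  have h3 : F (j.1 + 1) = g j := by rw [hF]; simp only [h2]
  have h4 : F 0 = g (0 - 1) := by rw [hF]; norm_num
  rw [h3, h4]


variable {Y g : Fin k → ℕ}

/-- the increment vector of a flow, as integers. -/
lemma Xof_cast (hg : Feas Y g) (m : Fin k) :
    ((Xof Y g m : ℤ)) = Y m + g (m - 1) - g m := by
  have h := hg m
  have : g m ≤ Y m + g (m - 1) := by omega
  simp only [Xof]
  omega

lemma Xof_pos (hg : Feas Y g) (m : Fin k) : 0 < Xof Y g m := by
  have h := hg m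
  simp only [Xof]; omega

lemma Xof_sum (hg : Feas Y g) : ∑ i, Xof Y g i = ∑ i, Y i := by
  have : ((∑ i, Xof Y g i : ℕ) : ℤ) = ((∑ i, Y i : ℕ) : ℤ) := by
    push_cast
    rw [Finset.sum_congr rfl (fun m _ => Xof_cast hg m)]
    have h1 : ∑ m : Fin k, ((Y m : ℤ) + g (m - 1) - g m)
        = (∑ m : Fin k, (Y m : ℤ)) + (∑ m : Fin k, (g (m - 1) : ℤ)) - ∑ m : Fin k, (g m : ℤ) := by
      rw [Finset.sum_sub_distrib, Finset.sum_add_distrib]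
    rw [h1, sum_pred (fun m => (g m : ℤ))]
    ring
  exact_mod_cast this

lemma mem_Eset_iff (hg : Feas Y g) (j : Fin k) :
    j ∈ Eset Y g ↔ Xof Y g j = 1 := by
  have h := hg j
  simp only [Eset, Finset.mem_filter, Finset.mem_univ, true_and, Xof]
  omega

/-- the difference vector `Y - Xof Y g` as integers. -/
lemma d_eq (hg : Feas Y g) (m : Fin k) :
    (Y m : ℤ) - (Xof Y g m : ℤ) = (g m : ℤ) - (g (m - 1) : ℤ) := by
  rw [Xof_cast hg m]; ring

lemma gamma_of_flow (hg : Feas Y g) (j : Fin k) :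
    gamma (fun m => (Y m : ℤ) - (Xof Y g m : ℤ)) j = (g j : ℤ) - (g (0 - 1) : ℤ) :=
  gamma_telescope _ (fun i => (g i : ℤ)) (fun i => d_eq hg i) j

/-- minimum of a flow. -/
noncomputable def mng (g : Fin k → ℕ) : ℕ := Finset.univ.inf' Finset.univ_nonempty g

lemma mng_le (g : Fin k → ℕ) (j : Fin k) : mng g ≤ g j :=
  Finset.inf'_le _ (Finset.mem_univ j)

lemma exists_mng (g : Fin k → ℕ) : ∃ j, g j = mng g := by
  obtain ⟨i, _, hi⟩ := Finset.exists_mem_eq_inf' (Finset.univ_nonempty (α := Fin k)) g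
  exact ⟨i, hi.symm⟩

lemma sInf_gamma_flow (hg : Feas Y g) :
    sInf (Set.range (gamma (fun m => (Y m : ℤ) - (Xof Y g m : ℤ))))
      = (mng g : ℤ) - (g (0 - 1) : ℤ) := by
  set d := fun m => (Y m : ℤ) - (Xof Y g m : ℤ) with hd
  apply le_antisymm
  · obtain ⟨j0, hj0⟩ := exists_mng g
    have : gamma d j0 = (mng g : ℤ) - (g (0 - 1) : ℤ) := by
      rw [gamma_of_flow hg, hj0]
    exact this ▸ csInf_le (Set.finite_range _).bddBelow ⟨j0, rfl⟩
  · apply le_csInf (Set.range_nonempty _)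
    rintro b ⟨j, rfl⟩
    rw [gamma_of_flow hg]
    have := mng_le g j
    omega

lemma phi_of_flow (hg : Feas Y g) :
    phi (fun m => (Y m : ℤ) - (Xof Y g m : ℤ))
      = (∑ j : Fin k, (g j : ℤ)) - k * (mng g : ℤ) := by
  rw [phi, sInf_gamma_flow hg]
  have h : ∀ j : Fin k, gamma (fun m => (Y m : ℤ) - (Xof Y g m : ℤ)) j
      - ((mng g : ℤ) - (g (0 - 1) : ℤ)) = (g j : ℤ) - (mng g : ℤ) := by
    intro j; rw [gamma_of_flow hg]; ring
  rw [Finset.sum_congr rfl (fun j _ => h j), Finset.sum_sub_distrib]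
  simp [Finset.card_univ, mul_comm]

omit [NeZero k] in
lemma phi_nonneg (d : Fin k → ℤ) : 0 ≤ phi d := by
  apply Finset.sum_nonneg
  intro j _
  have : sInf (Set.range (gamma d)) ≤ gamma d j :=
    csInf_le (Set.finite_range _).bddBelow ⟨j, rfl⟩
  omega

lemma gamma_succ (d : Fin k → ℤ) (hsum : ∑ i, d i = 0) (j : Fin k) :
    gamma d j = gamma d (j - 1) + d j := by
  by_cases h0 : j = 0
  · subst h0
    have h1 : gamma d (0 - 1) = 0 := by rw [gamma_univ]; exact hsum
    rw [h1, gamma_range]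
    simp
  · rcases Nat.exists_eq_succ_of_ne_zero (NeZero.ne k) with ⟨m, rfl⟩
    have hv : ((j - 1 : Fin (m+1))).1 = j.1 - 1 := by
      rw [Fin.coe_sub_one, if_neg h0]
    have hj1 : 1 ≤ j.1 := by
      rcases Nat.eq_zero_or_pos j.1 with h | h
      · exact absurd (Fin.ext h) h0
      · exact h
    rw [gamma_range, gamma_range, hv]
    have : j.1 + 1 = (j.1 - 1 + 1) + 1 := by omega
    rw [this, Finset.sum_range_succ]
    have : ((j.1 - 1 + 1 : ℕ) : Fin (m+1)) = j := by
      rw [show j.1 - 1 + 1 = j.1 by omega, Fin.cast_val_eq_self]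
    rw [this]

/-- the finset of configurations with positive entries summing to `n`. -/
def XF (k n : ℕ) : Finset (Fin k → ℕ) :=
  (Fintype.piFinset (fun _ => Finset.range (n+1))).filter
    (fun X => (∀ i, 0 < X i) ∧ ∑ i, X i = n)

omit [NeZero k] in
lemma mem_XF {n : ℕ} {X : Fin k → ℕ} :
    X ∈ XF k n ↔ (∀ i, 0 < X i) ∧ ∑ i, X i = n := by
  constructor
  · intro h; exact (Finset.mem_filter.mp h).2
  · intro h
    refine Finset.mem_filter.mpr ⟨?_, h⟩
    refine Fintype.mem_piFinset.mpr (fun i => ?_)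
    rw [Finset.mem_range_succ_iff, ← h.2]
    exact Finset.single_le_sum (fun i _ => Nat.zero_le _) (Finset.mem_univ i)

variable (Y) in
/-- forward map of the bijection `{feasible flows} ≃ {configurations} × ℕ`. -/
noncomputable def Fg (hY : ∀ i, 0 < Y i) :
    {g : Fin k → ℕ // Feas Y g} → ({X // X ∈ XF k (∑ i, Y i)} × ℕ) :=
  fun g => (⟨Xof Y g.1, mem_XF.mpr ⟨Xof_pos g.2, Xof_sum g.2⟩⟩, mng g.1)

lemma Fg_bijective (hY : ∀ i, 0 < Y i) : Function.Bijective (Fg Y hY) := by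
  constructor
  · rintro ⟨g, hg⟩ ⟨g', hg'⟩ hFg
    have hX : Xof Y g = Xof Y g' := congrArg (fun p => (p.1 : Fin k → ℕ)) hFg
    have hm : mng g = mng g' := congrArg Prod.snd hFg
    -- the flows differ by a constant
    have hgam : ∀ j, (g j : ℤ) - (g (0-1) : ℤ) = (g' j : ℤ) - (g' (0-1) : ℤ) := by
      intro j
      rw [← gamma_of_flow hg, ← gamma_of_flow hg', hX]
    set c : ℤ := (g (0-1) : ℤ) - (g' (0-1) : ℤ) with hc
    have hdiff : ∀ j, (g j : ℤ) = (g' j : ℤ) + c := by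
      intro j; have := hgam j; omega
    obtain ⟨j0, hj0⟩ := exists_mng g
    obtain ⟨j0', hj0'⟩ := exists_mng g'
    have h1 : (mng g : ℤ) = (g' j0 : ℤ) + c := by rw [← hj0]; exact hdiff j0
    have h2 : (g j0' : ℤ) = (mng g' : ℤ) + c := by rw [← hj0']; exact hdiff j0'
    have h3 := mng_le g' j0
    have h4 := mng_le g j0'
    have hc0 : c = 0 := by
      have hmm : (mng g : ℤ) = (mng g' : ℤ) := by exact_mod_cast congrArg (Nat.cast (R := ℤ)) hm
      omega
    apply Subtype.ext
    funext j
    have := hdiff j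
    rw [hc0] at this
    exact_mod_cast this
  · rintro ⟨⟨X, hX⟩, m⟩
    rw [mem_XF] at hX
    set d : Fin k → ℤ := fun i => (Y i : ℤ) - X i with hd
    have hdsum : ∑ i, d i = 0 := by
      simp only [hd, Finset.sum_sub_distrib]
      rw [← Nat.cast_sum, ← Nat.cast_sum, hX.2]
      ring
    have hbdd : ∀ j, sInf (Set.range (gamma d)) ≤ gamma d j :=
      fun j => csInf_le (Set.finite_range _).bddBelow ⟨j, rfl⟩
    set gX : Fin k → ℕ := fun j => (gamma d j - sInf (Set.range (gamma d))).toNat + m with hgX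
    have hcast : ∀ j, (gX j : ℤ) = gamma d j - sInf (Set.range (gamma d)) + m := by
      intro j
      simp only [hgX]
      push_cast [Int.toNat_of_nonneg (by have := hbdd j; omega : (0:ℤ) ≤ gamma d j - sInf (Set.range (gamma d)))]
      ring
    have hrec : ∀ j, gamma d j = gamma d (j - 1) + d j := gamma_succ d hdsum
    have hfeas : Feas Y gX := by
      intro j
      have h1 := hrec j
      have h2 : d j ≤ (Y j : ℤ) - 1 := by
        have := hX.1 j
        simp only [hd]
        omega
      have c1 := hcast j
      have c2 := hcast (j - 1)
      have : (gX j : ℤ) + 1 ≤ (gX (j-1) : ℤ) + Y j := by omega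
      exact_mod_cast this
    have hXof : Xof Y gX = X := by
      funext j
      have c1 := hcast j
      have c2 := hcast (j - 1)
      have h1 := hrec j
      have hXc := Xof_cast hfeas j
      have hdj : d j = (Y j : ℤ) - X j := by simp [hd]
      have : (Xof Y gX j : ℤ) = (X j : ℤ) := by omega
      exact_mod_cast this
    have hmng : mng gX = m := by
      obtain ⟨j0, hj0⟩ : ∃ j0, gamma d j0 = sInf (Set.range (gamma d)) := by
        have : sInf (Set.range (gamma d)) ∈ Set.range (gamma d) :=
          (Set.range_nonempty _).csInf_mem (Set.finite_range _)
        obtain ⟨j0, h⟩ := this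
        exact ⟨j0, h⟩
      apply le_antisymm
      · have : gX j0 = m := by
          have := hcast j0
          omega
        rw [← this]
        exact mng_le gX j0
      · apply Finset.le_inf'
        intro j _
        have := hbdd j
        have := hcast j
        omega
    refine ⟨⟨gX, hfeas⟩, ?_⟩
    simp only [Fg]
    congr 1
    · exact Subtype.ext hXof

variable (Y) in
/-- encoding of a flow with slacks as an arbitrary tuple. -/
def enc : (Σ g : {g : Fin k → ℕ // Feas Y g}, (↥(Eset Y g.1) → ℕ)) → (Fin k → ℕ) :=
  fun σ j => σ.1.1 j + (if h : j ∈ Eset Y σ.1.1 then σ.2 ⟨j, h⟩ else 0)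

lemma le_enc (σ : Σ g : {g : Fin k → ℕ // Feas Y g}, (↥(Eset Y g.1) → ℕ)) (j : Fin k) :
    σ.1.1 j ≤ enc Y σ j := Nat.le_add_right _ _

lemma enc_mem_of_ne (σ : Σ g : {g : Fin k → ℕ // Feas Y g}, (↥(Eset Y g.1) → ℕ)) (j : Fin k)
    (h : σ.1.1 j ≠ enc Y σ j) : j ∈ Eset Y σ.1.1 := by
  by_contra hc
  exact h (by simp [enc, hc])

lemma pred_closed_univ {A : Finset (Fin k)} (hA : ∀ j ∈ A, j - 1 ∈ A) {j₀ : Fin k}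
    (h0 : j₀ ∈ A) : ∀ j, j ∈ A := by
  have key : ∀ i : ℕ, j₀ - (i : Fin k) ∈ A := by
    intro i
    induction i with
    | zero => simpa using h0
    | succ i ih =>
        have h1 : j₀ - ((i + 1 : ℕ) : Fin k) = (j₀ - (i : Fin k)) - 1 := by push_cast; ring
        rw [h1]; exact hA _ ih
  intro j
  have := key ((j₀ - j).1)
  rwa [Fin.cast_val_eq_self, sub_sub_cancel] at this

lemma flow_le (hkn : k < ∑ i, Y i) (hg : Feas Y g) {g' : Fin k → ℕ} (hg' : Feas Y g')
    (t : Fin k → ℕ) (h2 : ∀ j, g j ≠ t j → j ∈ Eset Y g) (h1' : ∀ j, g' j ≤ t j)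
    (h1 : ∀ j, g j ≤ t j) : ∀ j, g' j ≤ g j := by
  by_contra hc
  push_neg at hc
  obtain ⟨j₀, hj₀⟩ := hc
  set A : Finset (Fin k) := Finset.univ.filter (fun j => g j < g' j) with hA
  have hmem : ∀ {j}, j ∈ A ↔ g j < g' j := by
    intro j; simp [hA]
  have hclosed : ∀ j ∈ A, j - 1 ∈ A := by
    intro j hj
    rw [hmem] at hj
    have hE : j ∈ Eset Y g := h2 j (by have := h1' j; omega)
    simp only [Eset, Finset.mem_filter, Finset.mem_univ, true_and] at hE
    have := hg' j
    rw [hmem]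
    omega
  have hall : ∀ j, j ∈ A := pred_closed_univ hclosed (hmem.mpr hj₀)
  have hallE : ∀ j, g j + 1 = g (j - 1) + Y j := by
    intro j
    have hE : j ∈ Eset Y g := h2 j (by have := h1' j; have := hmem.mp (hall j); omega)
    simpa [Eset] using hE
  have hsum : ∑ j : Fin k, (g j + 1) = ∑ j : Fin k, (g (j - 1) + Y j) :=
    Finset.sum_congr rfl (fun j _ => hallE j)
  rw [Finset.sum_add_distrib, Finset.sum_add_distrib, sum_pred (fun j => g j),
    Finset.sum_const, Finset.card_univ, Fintype.card_fin, smul_eq_mul, mul_one] at hsum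
  omega

lemma enc_injective (hkn : k < ∑ i, Y i) : Function.Injective (enc Y) := by
  rintro ⟨⟨g, hg⟩, w⟩ ⟨⟨g', hg'⟩, w'⟩ h
  set t := enc Y ⟨⟨g', hg'⟩, w'⟩ with ht
  have hgg' : g = g' := by
    funext j
    have hle1 : ∀ j, g j ≤ t j := fun j =>
      le_of_le_of_eq (le_enc ⟨⟨g, hg⟩, w⟩ j) (congrFun h j)
    have hle2 : ∀ j, g' j ≤ t j := fun j => by
      rw [ht]; exact le_enc ⟨⟨g', hg'⟩, w'⟩ j
    have hc1 : ∀ j, g j ≠ t j → j ∈ Eset Y g := fun j hj =>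
      enc_mem_of_ne ⟨⟨g, hg⟩, w⟩ j (by rw [congrFun h j]; exact hj)
    have hc2 : ∀ j, g' j ≠ t j → j ∈ Eset Y g' := fun j hj =>
      enc_mem_of_ne ⟨⟨g', hg'⟩, w'⟩ j (by rw [← ht]; exact hj)
    have d1 := flow_le hkn hg hg' t hc1 hle2 hle1 j
    have d2 := flow_le hkn hg' hg t hc2 hle1 hle2 j
    omega
  subst hgg'
  have hww' : w = w' := by
    funext i
    obtain ⟨j, hj⟩ := i
    have h2 := congrFun h j
    rw [ht] at h2
    simp only [enc, dif_pos hj] at h2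
    omega
  subst hww'
  rfl

lemma enc_surjective (hk2 : 2 ≤ k) (hY : ∀ i, 0 < Y i) : Function.Surjective (enc Y) := by
  classical
  intro t
  set SF : Finset (Fin k → ℕ) :=
    (Fintype.piFinset (fun j => Finset.range (t j + 1))).filter (fun g => Feas Y g) with hSF
  have hmemSF : ∀ {g : Fin k → ℕ}, g ∈ SF ↔ (∀ j, g j ≤ t j) ∧ Feas Y g := by
    intro g
    rw [hSF, Finset.mem_filter, Fintype.mem_piFinset]
    constructor
    · rintro ⟨h1, h2⟩
      exact ⟨fun j => Finset.mem_range_succ_iff.mp (h1 j), h2⟩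
    · rintro ⟨h1, h2⟩
      exact ⟨fun j => Finset.mem_range_succ_iff.mpr (h1 j), h2⟩
  have h0 : (fun _ => 0 : Fin k → ℕ) ∈ SF := by
    rw [hmemSF]
    refine ⟨fun j => Nat.zero_le _, fun j => ?_⟩
    show 0 + 1 ≤ 0 + Y j
    have := hY j; omega
  have hne : SF.Nonempty := ⟨_, h0⟩
  set G : Fin k → ℕ := SF.sup' hne id with hG
  have hGmem : (∀ j, G j ≤ t j) ∧ Feas Y G := by
    have hmem : G ∈ {g : Fin k → ℕ | (∀ j, g j ≤ t j) ∧ Feas Y g} := by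
      rw [hG]
      apply Finset.sup'_mem
      · rintro x ⟨hx1, hx2⟩ y ⟨hy1, hy2⟩
        constructor
        · intro j
          rw [Pi.sup_apply, (show ∀ a b : ℕ, a ⊔ b = max a b from fun _ _ => rfl)]
          exact max_le (hx1 j) (hy1 j)
        · intro j
          rw [Pi.sup_apply, Pi.sup_apply, (show ∀ a b : ℕ, a ⊔ b = max a b from fun _ _ => rfl), (show ∀ a b : ℕ, a ⊔ b = max a b from fun _ _ => rfl)]
          have h1 := hx2 j; have h2 := hy2 j
          omega
      · intro b hb
        exact hmemSF.mp hb
    exact hmem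
  have hGle : ∀ j, G j ≤ t j := hGmem.1
  have hGfeas : Feas Y G := hGmem.2
  have hcoin : ∀ j, G j = t j ∨ j ∈ Eset Y G := by
    intro j
    by_contra hc
    push_neg at hc
    obtain ⟨hc1, hc2⟩ := hc
    have hlt : G j < t j := lt_of_le_of_ne (hGle j) hc1
    have hstrict : G j + 2 ≤ G (j - 1) + Y j := by
      have h1 := hGfeas j
      have h2 : G j + 1 ≠ G (j - 1) + Y j := by
        intro hh; exact hc2 (by simp [Eset, hh])
      omega
    have hj1 : j - 1 ≠ j := by
      intro hh
      rw [sub_eq_self] at hh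
      rw [Fin.one_eq_zero_iff] at hh
      omega
    set g' : Fin k → ℕ := Function.update G j (G j + 1) with hg'
    have hg'app : ∀ x, g' x = if x = j then G j + 1 else G x := by
      intro x; rw [hg']; exact Function.update_apply G j (G j + 1) x
    have hg'mem : g' ∈ SF := by
      rw [hmemSF]
      constructor
      · intro x
        rw [hg'app]
        split
        · next hx => subst hx; omega
        · exact hGle x
      · intro x
        show g' x + 1 ≤ g' (x - 1) + Y x
        rw [hg'app, hg'app]
        by_cases hx : x = j
        · subst hx
          rw [if_pos rfl, if_neg hj1]
          omega
        · rw [if_neg hx]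
          by_cases hx1 : x - 1 = j
          · rw [if_pos hx1, ← hx1]
            have := hGfeas x
            omega
          · rw [if_neg hx1]
            exact hGfeas x
    have h5 : g' ≤ G := by rw [hG]; exact Finset.le_sup' id hg'mem
    have h6 : g' j ≤ G j := h5 j
    rw [hg'app, if_pos rfl] at h6
    omega
  refine ⟨⟨⟨G, hGfeas⟩, fun i => t i.1 - G i.1⟩, ?_⟩
  funext j
  simp only [enc]
  split
  · next hj => have := hGle j; omega
  · next hj =>
      have := hcoin j
      rcases this with h | h
      · omega
      · exact absurd h hj

lemma tsum_pow_fin (Q : ℝ≥0∞) (m : ℕ) :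
    ∑' (t : Fin m → ℕ), Q ^ (∑ j, t j) = (1 - Q)⁻¹ ^ m := by
  induction m with
  | zero =>
      rw [tsum_fintype]
      simp
  | succ m ih =>
      set e := Fin.consEquiv (fun _ => ℕ) with he
      rw [← Equiv.tsum_eq e (fun t => Q ^ (∑ j, t j))]
      have hval : ∀ p : ℕ × (Fin m → ℕ),
          Q ^ (∑ j, (e p) j) = Q ^ p.1 * Q ^ (∑ j, p.2 j) := by
        rintro ⟨a, b⟩
        rw [← pow_add]
        congr 1
        rw [Fin.sum_univ_succ]
        have h0 : (e (a, b)) 0 = a := by simp [he, Fin.consEquiv]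
        have hs : ∀ i : Fin m, (e (a, b)) i.succ = b i := by
          intro i; simp [he, Fin.consEquiv]
        rw [h0, Finset.sum_congr rfl (fun i _ => hs i)]
      calc ∑' p : ℕ × (Fin m → ℕ), Q ^ (∑ j, (e p) j)
          = ∑' p : ℕ × (Fin m → ℕ), Q ^ p.1 * Q ^ (∑ j, p.2 j) := by
            exact tsum_congr hval
        _ = ∑' (a : ℕ), ∑' (b : Fin m → ℕ), Q ^ a * Q ^ (∑ j, b j) :=
            ENNReal.tsum_prod (f := fun (a : ℕ) (b : Fin m → ℕ) => Q ^ a * Q ^ (∑ j, b j))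
        _ = ∑' (a : ℕ), Q ^ a * ∑' (b : Fin m → ℕ), Q ^ (∑ j, b j) := by
            exact tsum_congr (fun a => ENNReal.tsum_mul_left)
        _ = (∑' (a : ℕ), Q ^ a) * ((1 - Q)⁻¹) ^ m := by
            rw [ih, ENNReal.tsum_mul_right]
        _ = (1 - Q)⁻¹ ^ (m + 1) := by
            rw [ENNReal.tsum_geometric, pow_succ, mul_comm]

lemma tsum_pow (Q : ℝ≥0∞) (ι : Type) [Fintype ι] :
    ∑' (t : ι → ℕ), Q ^ (∑ j, t j) = (1 - Q)⁻¹ ^ (Fintype.card ι) := by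
  set e : (Fin (Fintype.card ι) → ℕ) ≃ (ι → ℕ) :=
    Equiv.arrowCongr (Fintype.equivFin ι).symm (Equiv.refl ℕ) with he
  rw [← Equiv.tsum_eq e (fun t => Q ^ (∑ j, t j)), ← tsum_pow_fin Q (Fintype.card ι)]
  apply tsum_congr
  intro u
  congr 1
  have : ∀ j : ι, (e u) j = u (Fintype.equivFin ι j) := by
    intro j; simp [he, Equiv.arrowCongr]
  rw [Finset.sum_congr rfl (fun j _ => this j)]
  exact (Fintype.sum_equiv (Fintype.equivFin ι) _ _ (fun j => rfl))

/-- number of coordinates equal to 1. -/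
def zcard (X : Fin k → ℕ) : ℕ := (Finset.univ.filter (fun j => X j = 1)).card

/-- `phi` of the difference vector, as a natural number. -/
noncomputable def phiN (Y X : Fin k → ℕ) : ℕ :=
  (phi (fun m => (Y m : ℤ) - (X m : ℤ))).toNat

lemma phiN_cast (Y X : Fin k → ℕ) :
    ((phiN Y X : ℤ)) = phi (fun m => (Y m : ℤ) - (X m : ℤ)) :=
  Int.toNat_of_nonneg (phi_nonneg _)

lemma phiN_add_flow (hg : Feas Y g) :
    phiN Y (Xof Y g) + k * mng g = ∑ j, g j := by
  have h1 := phi_of_flow hg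
  have h2 := phiN_cast Y (Xof Y g)
  have h3 : ((∑ j, g j : ℕ) : ℤ) = ∑ j : Fin k, (g j : ℤ) := by push_cast; rfl
  have : ((phiN Y (Xof Y g) + k * mng g : ℕ) : ℤ) = ((∑ j, g j : ℕ) : ℤ) := by
    push_cast
    rw [h2, h1]
    push_cast
    ring
  exact_mod_cast this

lemma zcard_flow (hg : Feas Y g) : zcard (Xof Y g) = (Eset Y g).card := by
  unfold zcard
  congr 1
  ext j
  simp only [Finset.mem_filter, Finset.mem_univ, true_and]
  rw [← mem_Eset_iff hg]

lemma sum_enc (σ : Σ g : {g : Fin k → ℕ // Feas Y g}, (↥(Eset Y g.1) → ℕ)) :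
    ∑ j, enc Y σ j = (∑ j, σ.1.1 j) + ∑ i : ↥(Eset Y σ.1.1), σ.2 i := by
  unfold enc
  rw [Finset.sum_add_distrib]
  congr 1
  have h1 : ∑ j : Fin k, (if h : j ∈ Eset Y σ.1.1 then σ.2 ⟨j, h⟩ else 0)
      = ∑ j ∈ Eset Y σ.1.1, (if h : j ∈ Eset Y σ.1.1 then σ.2 ⟨j, h⟩ else 0) :=
    (Finset.sum_subset (Finset.subset_univ _) (fun x _ hx => by rw [dif_neg hx])).symm
  rw [h1, ← Finset.sum_attach (Eset Y σ.1.1) (fun j => if h : j ∈ Eset Y σ.1.1 then σ.2 ⟨j, h⟩ else 0)]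
  rw [Finset.univ_eq_attach]
  refine Finset.sum_congr rfl (fun i _ => ?_)
  rw [dif_pos i.2]

lemma core_R1 (hk2 : 2 ≤ k) (hY : ∀ i, 0 < Y i) (hkn : k < ∑ i, Y i) (Q : ℝ≥0∞) :
    (1 - Q)⁻¹ ^ k
      = ∑ X ∈ XF k (∑ i, Y i),
          Q ^ phiN Y X * (1 - Q)⁻¹ ^ zcard X * (1 - Q ^ k)⁻¹ := by
  have step1 : ∑' (t : Fin k → ℕ), Q ^ (∑ j, t j) = (1 - Q)⁻¹ ^ k := by
    rw [tsum_pow Q (Fin k), Fintype.card_fin]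
  have step2 : ∑' (t : Fin k → ℕ), Q ^ (∑ j, t j)
      = ∑' (σ : Σ g : {g : Fin k → ℕ // Feas Y g}, (↥(Eset Y g.1) → ℕ)),
          Q ^ (∑ j, enc Y σ j) := by
    rw [← Equiv.tsum_eq (Equiv.ofBijective (enc Y)
      (show Function.Bijective (enc Y) from ⟨enc_injective hkn, enc_surjective hk2 hY⟩)) (fun t => Q ^ (∑ j, t j))]
    exact tsum_congr (fun σ => by rw [Equiv.ofBijective_apply])
  have step3 : ∑' (σ : Σ g : {g : Fin k → ℕ // Feas Y g}, (↥(Eset Y g.1) → ℕ)),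
      Q ^ (∑ j, enc Y σ j)
      = ∑' (g : {g : Fin k → ℕ // Feas Y g}),
          Q ^ (∑ j, g.1 j) * (1 - Q)⁻¹ ^ (Eset Y g.1).card := by
    rw [ENNReal.tsum_sigma' (fun σ => Q ^ (∑ j, enc Y σ j))]
    apply tsum_congr
    intro g
    calc ∑' (w : ↥(Eset Y g.1) → ℕ), Q ^ (∑ j, enc Y ⟨g, w⟩ j)
        = ∑' (w : ↥(Eset Y g.1) → ℕ), Q ^ (∑ j, g.1 j) * Q ^ (∑ i : ↥(Eset Y g.1), w i) := by
          apply tsum_congr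
          intro w
          rw [sum_enc ⟨g, w⟩, pow_add]
      _ = Q ^ (∑ j, g.1 j) * ∑' (w : ↥(Eset Y g.1) → ℕ), Q ^ (∑ i : ↥(Eset Y g.1), w i) :=
          ENNReal.tsum_mul_left
      _ = Q ^ (∑ j, g.1 j) * (1 - Q)⁻¹ ^ (Eset Y g.1).card := by
          rw [tsum_pow Q ↥(Eset Y g.1), Fintype.card_coe]
  have step4 : ∑' (g : {g : Fin k → ℕ // Feas Y g}),
      Q ^ (∑ j, g.1 j) * (1 - Q)⁻¹ ^ (Eset Y g.1).card
      = ∑' (p : {X // X ∈ XF k (∑ i, Y i)} × ℕ),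
          Q ^ (phiN Y p.1.1 + k * p.2) * (1 - Q)⁻¹ ^ zcard p.1.1 := by
    rw [← Equiv.tsum_eq (Equiv.ofBijective (Fg Y hY) (Fg_bijective hY))
      (fun p => Q ^ (phiN Y p.1.1 + k * p.2) * (1 - Q)⁻¹ ^ zcard p.1.1)]
    apply tsum_congr
    intro g
    have h1 : (Equiv.ofBijective (Fg Y hY) (Fg_bijective hY)) g = Fg Y hY g := rfl
    rw [h1]
    simp only [Fg]
    rw [phiN_add_flow g.2, zcard_flow g.2]
  have step5 : ∑' (p : {X // X ∈ XF k (∑ i, Y i)} × ℕ),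
      Q ^ (phiN Y p.1.1 + k * p.2) * (1 - Q)⁻¹ ^ zcard p.1.1
      = ∑ X ∈ XF k (∑ i, Y i),
          Q ^ phiN Y X * (1 - Q)⁻¹ ^ zcard X * (1 - Q ^ k)⁻¹ := by
    rw [ENNReal.tsum_prod (f := fun (X : {X // X ∈ XF k (∑ i, Y i)}) (m : ℕ) =>
      Q ^ (phiN Y X.1 + k * m) * (1 - Q)⁻¹ ^ zcard X.1)]
    rw [tsum_fintype]
    rw [← Finset.sum_coe_sort (XF k (∑ i, Y i))
      (fun X => Q ^ phiN Y X * (1 - Q)⁻¹ ^ zcard X * (1 - Q ^ k)⁻¹)]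
    apply Finset.sum_congr rfl
    intro X _
    calc ∑' (m : ℕ), Q ^ (phiN Y X.1 + k * m) * (1 - Q)⁻¹ ^ zcard X.1
        = ∑' (m : ℕ), (Q ^ phiN Y X.1 * (1 - Q)⁻¹ ^ zcard X.1) * (Q ^ k) ^ m := by
          apply tsum_congr
          intro m
          rw [pow_add, ← pow_mul]
          ring
      _ = (Q ^ phiN Y X.1 * (1 - Q)⁻¹ ^ zcard X.1) * ∑' (m : ℕ), (Q ^ k) ^ m :=
          ENNReal.tsum_mul_left
      _ = Q ^ phiN Y X.1 * (1 - Q)⁻¹ ^ zcard X.1 * (1 - Q ^ k)⁻¹ := by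
          rw [ENNReal.tsum_geometric]
  rw [← step1, step2, step3, step4, step5]

lemma core_R2 (hk2 : 2 ≤ k) (hY : ∀ i, 0 < Y i) (hkn : k < ∑ i, Y i)
    {Q : ℝ≥0∞} (hQ1 : Q < 1) :
    ∑ X ∈ XF k (∑ i, Y i), Q ^ phiN Y X * (1 - Q)⁻¹ ^ zcard X
      = (1 - Q ^ k) * (1 - Q)⁻¹ ^ k := by
  have h1 := core_R1 hk2 hY hkn Q
  have hQk : Q ^ k < 1 := pow_lt_one₀ zero_le hQ1 (by omega)
  have h0 : (1 - Q ^ k) ≠ 0 := by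
    intro hc
    rw [tsub_eq_zero_iff_le] at hc
    exact absurd hc (not_le.mpr hQk)
  have ht : (1 - Q ^ k) ≠ ⊤ := ne_top_of_le_ne_top ENNReal.one_ne_top tsub_le_self
  calc ∑ X ∈ XF k (∑ i, Y i), Q ^ phiN Y X * (1 - Q)⁻¹ ^ zcard X
      = ∑ X ∈ XF k (∑ i, Y i),
          (1 - Q ^ k) * (Q ^ phiN Y X * (1 - Q)⁻¹ ^ zcard X * (1 - Q ^ k)⁻¹) := by
        refine Finset.sum_congr rfl (fun X _ => ?_)
        rw [mul_comm (1 - Q ^ k), mul_assoc, ENNReal.inv_mul_cancel h0 ht, mul_one]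
    _ = (1 - Q ^ k) * ∑ X ∈ XF k (∑ i, Y i),
          Q ^ phiN Y X * (1 - Q)⁻¹ ^ zcard X * (1 - Q ^ k)⁻¹ := by
        rw [Finset.mul_sum]
    _ = (1 - Q ^ k) * (1 - Q)⁻¹ ^ k := by rw [← h1]

lemma core_real (hk2 : 2 ≤ k) (hY : ∀ i, 0 < Y i) (hkn : k < ∑ i, Y i)
    {q : ℝ} (hq0 : 0 < q) (hq1 : q < 1) :
    ∑ X ∈ XF k (∑ i, Y i), q ^ phiN Y X * (1 - q)⁻¹ ^ zcard X
      = (1 - q ^ k) * (1 - q)⁻¹ ^ k := by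
  set Q := ENNReal.ofReal q with hQdef
  have hQ1 : Q < 1 := ENNReal.ofReal_lt_one.mpr hq1
  have h2 := core_R2 hk2 hY hkn hQ1
  have hs0 : (0:ℝ) < 1 - q := by linarith
  have hqk1 : q ^ k ≤ 1 := pow_le_one₀ (le_of_lt hq0) (le_of_lt hq1)
  have hiq : (1 - Q)⁻¹ = ENNReal.ofReal ((1-q)⁻¹) := by
    rw [ENNReal.ofReal_inv_of_pos hs0, ENNReal.ofReal_sub 1 hq0.le, ENNReal.ofReal_one]
  have hQk : 1 - Q ^ k = ENNReal.ofReal (1 - q ^ k) := by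
    rw [ENNReal.ofReal_sub 1 (pow_nonneg hq0.le k), ENNReal.ofReal_one,
      ENNReal.ofReal_pow hq0.le]
  have hinv : (0:ℝ) ≤ (1-q)⁻¹ := inv_nonneg.mpr hs0.le
  have hterm : ∀ X : Fin k → ℕ, (0:ℝ) ≤ q ^ phiN Y X * (1-q)⁻¹ ^ zcard X :=
    fun X => mul_nonneg (pow_nonneg hq0.le _) (pow_nonneg hinv _)
  have hL : ∑ X ∈ XF k (∑ i, Y i), Q ^ phiN Y X * (1 - Q)⁻¹ ^ zcard X
      = ENNReal.ofReal (∑ X ∈ XF k (∑ i, Y i), q ^ phiN Y X * (1-q)⁻¹ ^ zcard X) := by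
    rw [ENNReal.ofReal_sum_of_nonneg (fun X _ => hterm X)]
    refine Finset.sum_congr rfl (fun X _ => ?_)
    rw [ENNReal.ofReal_mul (pow_nonneg hq0.le _), ENNReal.ofReal_pow hq0.le,
      ENNReal.ofReal_pow hinv, hiq]
  have hR : (1 - Q ^ k) * (1 - Q)⁻¹ ^ k
      = ENNReal.ofReal ((1 - q^k) * (1-q)⁻¹^k) := by
    rw [ENNReal.ofReal_mul (by linarith), hQk, hiq, ENNReal.ofReal_pow hinv]
  rw [hL, hR] at h2
  exact (ENNReal.ofReal_eq_ofReal_iff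
    (Finset.sum_nonneg (fun X _ => hterm X))
    (mul_nonneg (by linarith) (pow_nonneg hinv _))).mp h2

omit [NeZero k] in
lemma sum_powerset_r (r : ℝ) (E : Finset (Fin k)) :
    ∑ B ∈ E.powerset, r ^ B.card = (r + 1) ^ E.card := by
  classical
  have h := Finset.prod_add (fun _ : Fin k => r) (fun _ => 1) E
  simp only [Finset.prod_const, one_pow, mul_one] at h
  exact h.symm

/-- the inner sum over blocked sets. -/
lemma Bsum (r : ℝ) (X : Fin k → ℕ) :
    ∑ B ∈ (Finset.univ : Finset (Finset (Fin k))),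
        (if (B ≠ Finset.univ ∧ ∀ i ∈ B, X i = 1) then r ^ B.card else 0)
      = (r + 1) ^ zcard X - (if ∀ i, X i = 1 then r ^ k else 0) := by
  classical
  set E : Finset (Fin k) := Finset.univ.filter (fun j => X j = 1) with hE
  have hiff : ∀ B : Finset (Fin k), ((∀ i ∈ B, X i = 1) ↔ B ∈ E.powerset) := by
    intro B
    rw [Finset.mem_powerset]
    constructor
    · intro h i hi
      rw [hE, Finset.mem_filter]
      exact ⟨Finset.mem_univ i, h i hi⟩
    · intro h i hi
      have := h hi
      rw [hE, Finset.mem_filter] at this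
      exact this.2
  have hcond : ∀ B : Finset (Fin k),
      (B ≠ Finset.univ ∧ ∀ i ∈ B, X i = 1) ↔ B ∈ E.powerset.erase Finset.univ := by
    intro B
    rw [Finset.mem_erase, hiff]
  have hmain : ∑ B ∈ (Finset.univ : Finset (Finset (Fin k))),
      (if (B ≠ Finset.univ ∧ ∀ i ∈ B, X i = 1) then r ^ B.card else 0)
      = ∑ B ∈ E.powerset.erase Finset.univ, r ^ B.card := by
    have h1 : ∑ B ∈ (Finset.univ : Finset (Finset (Fin k))),
        (if (B ≠ Finset.univ ∧ ∀ i ∈ B, X i = 1) then r ^ B.card else 0)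
        = ∑ B ∈ (Finset.univ : Finset (Finset (Fin k))),
          (if B ∈ E.powerset.erase Finset.univ then r ^ B.card else 0) :=
      Finset.sum_congr rfl (fun B _ => if_congr (hcond B) rfl rfl)
    rw [h1, Finset.sum_ite_mem, Finset.univ_inter]
  rw [hmain]
  have hz : zcard X = E.card := rfl
  by_cases hall : ∀ i, X i = 1
  · have hEuniv : Finset.univ ∈ E.powerset := by
      rw [← hiff Finset.univ]
      exact fun i _ => hall i
    rw [Finset.sum_erase_eq_sub hEuniv, sum_powerset_r, hz, if_pos hall,
      Finset.card_univ, Fintype.card_fin]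
  · have hEuniv : Finset.univ ∉ E.powerset := by
      rw [← hiff Finset.univ]
      intro hc
      exact hall (fun i => hc i (Finset.mem_univ i))
    rw [Finset.erase_eq_of_notMem hEuniv, sum_powerset_r, hz, if_neg hall, sub_zero]

lemma phi_zero : phi (fun _ : Fin k => (0:ℤ)) = 0 := by
  have hg : ∀ j, gamma (fun _ : Fin k => (0:ℤ)) j = 0 := by
    intro j; unfold gamma; exact Finset.sum_const_zero
  have hr : Set.range (gamma (fun _ : Fin k => (0:ℤ))) = {0} := by
    ext x
    constructor
    · rintro ⟨j, rfl⟩; rw [hg]; rfl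
    · rintro rfl; exact ⟨0, hg 0⟩
  unfold phi
  rw [hr]
  simp [hg]

omit [NeZero k] in
lemma all_ones {X : Fin k → ℕ} (hpos : ∀ i, 0 < X i) (hsum : ∑ i, X i = k) :
    ∀ i, X i = 1 := by
  intro i0
  by_contra hne
  have h2 : 2 ≤ X i0 := by have := hpos i0; omega
  have hrest : (Finset.univ.erase i0).card • 1 ≤ ∑ i ∈ Finset.univ.erase i0, X i :=
    Finset.card_nsmul_le_sum _ _ _ (fun i _ => hpos i)
  have hcard : (Finset.univ.erase i0).card = k - 1 := by
    rw [Finset.card_erase_of_mem (Finset.mem_univ i0), Finset.card_univ, Fintype.card_fin]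
  have hsplit : ∑ i, X i = X i0 + ∑ i ∈ Finset.univ.erase i0, X i :=
    (Finset.add_sum_erase _ X (Finset.mem_univ i0)).symm
  have hk1 : 1 ≤ k := by
    have : i0.1 < k := i0.2
    omega
  rw [hsplit] at hsum
  rw [hcard] at hrest
  simp only [smul_eq_mul, mul_one] at hrest
  omega

lemma XF_self : XF k k = {fun _ : Fin k => 1} := by
  ext X
  rw [mem_XF, Finset.mem_singleton]
  constructor
  · rintro ⟨hpos, hsum⟩
    funext i
    exact all_ones hpos hsum i
  · rintro rfl
    refine ⟨fun i => one_pos, ?_⟩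
    rw [Finset.sum_const, Finset.card_univ, Fintype.card_fin, smul_eq_mul, mul_one]

lemma zcard_ones : zcard (fun _ : Fin k => 1) = k := by
  unfold zcard
  rw [Finset.filter_true_of_mem (fun i _ => rfl), Finset.card_univ, Fintype.card_fin]

end WH

open WH

/-- with transition probabilities
`p_{ij} = r^{|C|} · (s^k / (1 - q^k)) · q^{φ(Y - X)}` from state `i = (X,B)` to
state `j = (Y,C)`, the weights `ω_i = r^{|B|}` satisfy the balance
`Σ_i ω_i p_{ij} = ω_j` for every state `j`; consequently the normalized
distribution `ν = ω / Σ ω` is stationary. -/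
theorem warehouse_stationary_distribution (k n : ℕ) (hk : 2 ≤ k) (hn : k ≤ n)
    (s q r : ℝ) (hs0 : 0 < s) (hs1 : s < 1) (hq : q = 1 - s) (hr : r = q / s)
    (p : ((Fin k → ℕ) × Finset (Fin k)) → ((Fin k → ℕ) × Finset (Fin k)) → ℝ)
    (hp : ∀ i j, p i j
      = r ^ j.2.card * (s ^ k / (1 - q ^ k))
          * q ^ phi (fun m => (j.1 m : ℤ) - (i.1 m : ℤ)))
    (ω : ((Fin k → ℕ) × Finset (Fin k)) → ℝ) (hω : ∀ i, ω i = r ^ i.2.card) :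
    (∀ j ∈ States k n, ∑ᶠ i ∈ States k n, ω i * p i j = ω j) ∧
    (∀ j ∈ States k n,
      ∑ᶠ i ∈ States k n, (ω i / ∑ᶠ i' ∈ States k n, ω i') * p i j
        = ω j / ∑ᶠ i' ∈ States k n, ω i') := by
  classical
  haveI : NeZero k := ⟨by omega⟩
  -- basic facts about q, s, r
  have hq0 : 0 < q := by rw [hq]; linarith
  have hq1 : q < 1 := by rw [hq]; linarith
  have hqs : 1 - q = s := by rw [hq]; ring
  have hr1 : r + 1 = (1 - q)⁻¹ := by
    rw [hqs, hr, hq]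
    field_simp
    ring
  have hqk : q ^ k < 1 := pow_lt_one₀ hq0.le hq1 (by omega)
  have hqk0 : 1 - q ^ k ≠ 0 := by nlinarith
  have hsne : s ≠ 0 := ne_of_gt hs0
  -- the states as a finset
  set SFin : Finset ((Fin k → ℕ) × Finset (Fin k)) :=
    (XF k n ×ˢ (Finset.univ : Finset (Finset (Fin k)))).filter
      (fun p => p.2 ≠ Finset.univ ∧ ∀ i ∈ p.2, p.1 i = 1) with hSFin
  have hset : States k n = ↑SFin := by
    ext x
    simp only [States, Set.mem_setOf_eq, hSFin, Finset.coe_filter, Finset.mem_product,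
      Finset.mem_coe, Set.mem_setOf_eq, mem_XF, Finset.mem_univ, and_true]
    tauto
  -- the key computation
  have key : ∀ j ∈ States k n, ∑ i ∈ SFin, ω i * p i j = ω j := by
    rintro ⟨Y, C⟩ hj
    obtain ⟨hY1, hYsum, hC, hCY⟩ := hj
    simp only at hY1 hYsum hC hCY
    have hsum_eq : ∑ i ∈ SFin, ω i * p i ⟨Y, C⟩
        = ∑ X ∈ XF k n,
            (∑ B ∈ (Finset.univ : Finset (Finset (Fin k))),
              (if (B ≠ Finset.univ ∧ ∀ i ∈ B, X i = 1) then r ^ B.card else 0))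
            * (r ^ C.card * (s ^ k / (1 - q ^ k))
                * q ^ phi (fun m => (Y m : ℤ) - (X m : ℤ))) := by
      rw [hSFin, Finset.sum_filter, Finset.sum_product]
      refine Finset.sum_congr rfl (fun X _ => ?_)
      rw [Finset.sum_mul]
      refine Finset.sum_congr rfl (fun B _ => ?_)
      rw [ite_mul, zero_mul, hω, hp]
    rw [hsum_eq]
    have hBsum : ∀ X : Fin k → ℕ,
        (∑ B ∈ (Finset.univ : Finset (Finset (Fin k))),
          (if (B ≠ Finset.univ ∧ ∀ i ∈ B, X i = 1) then r ^ B.card else 0))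
        = (r + 1) ^ zcard X - (if ∀ i, X i = 1 then r ^ k else 0) := Bsum r
    rw [Finset.sum_congr rfl (fun X _ => by rw [hBsum X])]
    rw [hω]
    simp only
    rcases eq_or_lt_of_le hn with hkn | hkn
    · -- n = k : the only configuration is all ones
      subst hkn
      have hYone : Y = fun _ => 1 := by
        funext i; exact all_ones hY1 hYsum i
      rw [XF_self, Finset.sum_singleton, zcard_ones, if_pos (fun _ => rfl)]
      have hphi : phi (fun m => ((Y m : ℤ) - ((fun _ : Fin k => 1) m : ℕ))) = 0 := by
        have : (fun m => ((Y m : ℤ) - ((fun _ : Fin k => 1) m : ℕ))) = (fun _ : Fin k => (0:ℤ)) := by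
          funext m
          rw [hYone]
          norm_num
        rw [this, phi_zero]
      rw [hphi, zpow_zero, mul_one]
      rw [hr1, hqs, hr]
      field_simp
      rw [sub_mul, div_pow, div_pow, div_mul_cancel₀ _ (pow_ne_zero k hsne),
        div_mul_cancel₀ _ (pow_ne_zero k hsne), one_pow]
    · -- n > k : use the core counting identity
      have hite : ∀ X ∈ XF k n, ((r + 1) ^ zcard X - (if ∀ i, X i = 1 then r ^ k else 0))
          = (1 - q)⁻¹ ^ zcard X := by
        intro X hX
        rw [mem_XF] at hX
        have : ¬ (∀ i, X i = 1) := by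
          intro hall
          have : ∑ i, X i = k := by
            rw [Finset.sum_congr rfl (fun i _ => hall i), Finset.sum_const,
              Finset.card_univ, Fintype.card_fin, smul_eq_mul, mul_one]
          omega
        rw [if_neg this, sub_zero, hr1]
      rw [Finset.sum_congr rfl (fun X hX => by rw [hite X hX])]
      have hcore := core_real (Y := Y) hk hY1 (by rw [hYsum]; exact hkn) hq0 hq1
      rw [hYsum] at hcore
      have hphiX : ∀ X : Fin k → ℕ, (q : ℝ) ^ phi (fun m => (Y m : ℤ) - (X m : ℤ))
          = q ^ phiN Y X := by
        intro X
        rw [← phiN_cast, zpow_natCast]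
      have : ∑ X ∈ XF k n, (1 - q)⁻¹ ^ zcard X
            * (r ^ C.card * (s ^ k / (1 - q ^ k)) * q ^ phi (fun m => (Y m : ℤ) - (X m : ℤ)))
          = (r ^ C.card * (s ^ k / (1 - q ^ k)))
            * ∑ X ∈ XF k n, q ^ phiN Y X * (1 - q)⁻¹ ^ zcard X := by
        rw [Finset.mul_sum]
        refine Finset.sum_congr rfl (fun X _ => ?_)
        rw [hphiX X]
        ring
      rw [this, hcore, hqs]
      field_simp
      rw [one_div, mul_assoc, ← mul_pow, mul_inv_cancel₀ hsne, one_pow, mul_one]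
  refine ⟨fun j hj => ?_, fun j hj => ?_⟩
  · rw [hset, finsum_mem_coe_finset]
    exact key j hj
  · simp only [hset, finsum_mem_coe_finset]
    have h1 : ∑ i ∈ SFin, ω i / (∑ i' ∈ SFin, ω i') * p i j
        = (∑ i ∈ SFin, ω i * p i j) / (∑ i' ∈ SFin, ω i') := by
      rw [Finset.sum_div]
      exact Finset.sum_congr rfl (fun i _ => by ring)
    rw [h1, key j hj]
end
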